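/- Let n ≥ 1 and let x ∈ ℝⁿ have all coordinates nonnegative. Define A_n(x) = |x − (|x|/√n)·𝟙|² and B_n(x) = Σ_{i,j=1}^{n} (x_i − x_j)², where |·| is the Euclidean norm and 𝟙 ∈ ℝⁿ is the all-ones vector. Then n·A_n(x) ≤ B_n(x) ≤ 2n·A_n(x). -/

import Mathlib

/-- The Euclidean norm on `ℝⁿ` (coordinates model). -/
noncomputable def eunorm {n : ℕ} (x : Fin n → ℝ) : ℝ := Real.sqrt (∑ i, (x i) ^ 2)

/-- For `x ∈ ℝⁿ` with nonnegative coordinates, with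
`A_n(x) = |x − (|x|/√n)·𝟙|²` and `B_n(x) = Σ_{i,j} (x_i − x_j)²`, one has
`n·A_n(x) ≤ B_n(x) ≤ 2n·A_n(x)`. -/
theorem stmt2 {n : ℕ} (hn : 1 ≤ n) (x : Fin n → ℝ) (hx : ∀ i, 0 ≤ x i) :
    (n : ℝ) * eunorm (x - (eunorm x / Real.sqrt n) • (fun _ => (1 : ℝ))) ^ 2 ≤
      ∑ i, ∑ j, (x i - x j) ^ 2 ∧
    ∑ i, ∑ j, (x i - x j) ^ 2 ≤
      2 * (n : ℝ) * eunorm (x - (eunorm x / Real.sqrt n) • (fun _ => (1 : ℝ))) ^ 2 := by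
  set q : ℝ := ∑ i, (x i) ^ 2 with hqdef
  set s : ℝ := ∑ i, x i with hsdef
  have hq0 : 0 ≤ q := Finset.sum_nonneg fun i _ => sq_nonneg _
  have hs0 : 0 ≤ s := Finset.sum_nonneg fun i _ => hx i
  have hn0 : (0:ℝ) < n := by exact_mod_cast hn
  -- Cauchy–Schwarz: s^2 ≤ n * q
  have hcs : s ^ 2 ≤ (n : ℝ) * q := by
    have := sq_sum_le_card_mul_sum_sq (s := Finset.univ) (f := x)
    simpa [hqdef, hsdef] using this
  have hsqn : Real.sqrt n ^ 2 = (n : ℝ) := Real.sq_sqrt hn0.le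
  have hsqq : Real.sqrt q ^ 2 = q := Real.sq_sqrt hq0
  have hsle : s ≤ Real.sqrt n * Real.sqrt q := by
    calc s = Real.sqrt (s ^ 2) := (Real.sqrt_sq hs0).symm
      _ ≤ Real.sqrt ((n : ℝ) * q) := Real.sqrt_le_sqrt hcs
      _ = Real.sqrt n * Real.sqrt q := Real.sqrt_mul hn0.le q
  set c : ℝ := Real.sqrt q / Real.sqrt n with hcdef
  have hnc : (n : ℝ) * c = Real.sqrt n * Real.sqrt q := by
    have h : Real.sqrt n * Real.sqrt n = (n:ℝ) := Real.mul_self_sqrt hn0.le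
    have hsn0 : Real.sqrt n ≠ 0 := by positivity
    rw [hcdef]
    calc (n:ℝ) * (Real.sqrt q / Real.sqrt n)
        = Real.sqrt n * Real.sqrt n * (Real.sqrt q / Real.sqrt n) := by rw [h]
      _ = Real.sqrt n * Real.sqrt q * (Real.sqrt n / Real.sqrt n) := by ring
      _ = Real.sqrt n * Real.sqrt q := by rw [div_self hsn0, mul_one]
  have heux : eunorm x = Real.sqrt q := rfl
  have hA : eunorm (x - (eunorm x / Real.sqrt n) • (fun _ => (1 : ℝ))) ^ 2
      = ∑ i, (x i - c) ^ 2 := by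
    rw [eunorm, Real.sq_sqrt (Finset.sum_nonneg fun i _ => sq_nonneg _)]
    apply Finset.sum_congr rfl
    intro i _
    simp [heux, hcdef]
  have hAval : ∑ i, (x i - c) ^ 2 = q - 2 * c * s + n * c ^ 2 := by
    have : ∀ i : Fin n, (x i - c) ^ 2 = x i ^ 2 - 2 * c * x i + c ^ 2 := by
      intro i; ring
    simp_rw [this]
    rw [Finset.sum_add_distrib, Finset.sum_sub_distrib, ← Finset.mul_sum,
      Finset.sum_const]
    simp [hqdef, hsdef, mul_comm]
  have hc2 : (n : ℝ) * c ^ 2 = q := by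
    have : ((n:ℝ) * c) * c = Real.sqrt n * Real.sqrt q * (Real.sqrt q / Real.sqrt n) := by
      rw [hnc, hcdef]
    have hsn0 : Real.sqrt n ≠ 0 := by positivity
    calc (n : ℝ) * c ^ 2 = ((n:ℝ) * c) * c := by ring
      _ = Real.sqrt n * Real.sqrt q * (Real.sqrt q / Real.sqrt n) := this
      _ = q := by
          field_simp
          linear_combination Real.mul_self_sqrt hq0
  have hB : ∑ i, ∑ j, (x i - x j) ^ 2 = 2 * n * q - 2 * s ^ 2 := by
    have : ∀ i j : Fin n, (x i - x j) ^ 2 = x i ^ 2 - 2 * (x i * x j) + x j ^ 2 := by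
      intros; ring
    simp_rw [this, Finset.sum_add_distrib, Finset.sum_sub_distrib, ← Finset.mul_sum,
      ← Finset.sum_mul, Finset.sum_const, Finset.card_univ, Fintype.card_fin]
    simp only [nsmul_eq_mul, ← Finset.mul_sum, ← hqdef, ← hsdef]
    ring
  rw [hA, hAval, hB]
  constructor
  · -- n*(q - 2cs + n c²) ≤ 2nq - 2s² ; n c² = q, n c = √n√q, so need 2s² ≤ 2 s √n √q
    nlinarith [mul_le_mul_of_nonneg_left hsle hs0]
  · nlinarith [sq_nonneg (Real.sqrt n * Real.sqrt q - s), hc2, hnc]
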